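/- Let S be a finite set of real numbers with at least two elements, let m = min S and M = max S, and let d be a real number with d ∉ S. Then (M + m)·⋆((S ∪ {d}) \ {M})·⋆(S \ {m}) = (d + m)·⋆(S)·⋆((S ∪ {d}) \ {m, M}). -/

import Mathlib

/-- `⋆(A) = ∏_{x,y ∈ A, x < y} (x + y)`. -/
noncomputable def starOp' (A : Finset ℝ) : ℝ :=
  ∏ x ∈ A, ∏ y ∈ A.filter (fun y => x < y), (x + y)

lemma star_insert' {A : Finset ℝ} {a : ℝ} (ha : a ∉ A) :
    starOp' (insert a A) = (∏ x ∈ A, (a + x)) * starOp' A := by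
  unfold starOp'
  rw [Finset.prod_insert ha, Finset.filter_insert, if_neg (lt_irrefl a)]
  have h2 : ∀ x ∈ A, (∏ y ∈ (insert a A).filter (fun y => x < y), (x + y))
      = (if x < a then (x + a) else 1) * ∏ y ∈ A.filter (fun y => x < y), (x + y) := by
    intro x hx
    rw [Finset.filter_insert]
    split_ifs with h
    · rw [Finset.prod_insert (fun hmem => ha (Finset.mem_filter.1 hmem).1)]
    · rw [one_mul]
  rw [Finset.prod_congr rfl h2, Finset.prod_mul_distrib, ← Finset.prod_filter]
  have h3 : A.filter (fun x => ¬ a < x) = A.filter (fun x => x < a) := by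
    apply Finset.filter_congr
    intro x hx
    simp only [not_lt, eq_iff_iff]
    constructor
    · exact fun h => lt_of_le_of_ne h (fun h' => ha (h' ▸ hx))
    · exact le_of_lt
  have h4 : ∏ x ∈ A.filter (fun x => x < a), (x + a)
      = ∏ x ∈ A.filter (fun x => x < a), (a + x) := by
    apply Finset.prod_congr rfl; intros; ring
  rw [h4, ← h3, ← mul_assoc, Finset.prod_filter_mul_prod_filter_not A (fun y => a < y)]

lemma erase_comm' (s : Finset ℝ) (a b : ℝ) : (s.erase a).erase b = (s.erase b).erase a := by
  ext z; simp only [Finset.mem_erase]; tauto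

/-- Even-case analogue of the ratio simplification (24). -/
theorem star'_ratio_24 (S : Finset ℝ) (m M d : ℝ)
    (hcard : 2 ≤ S.card)
    (hmS : m ∈ S) (hm : ∀ x ∈ S, m ≤ x)
    (hMS : M ∈ S) (hM : ∀ x ∈ S, x ≤ M)
    (hdS : d ∉ S) :
    (M + m) * starOp' ((insert d S).erase M) * starOp' (S.erase m) =
      (d + m) * starOp' S * starOp' (((insert d S).erase m).erase M) := by
  obtain ⟨x, hx, y, hy, hxy⟩ := Finset.one_lt_card.mp hcard
  have hmM : m < M := by
    by_contra h
    push_neg at h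
    have hx' : x = m := le_antisymm (le_trans (hM x hx) h) (hm x hx)
    have hy' : y = m := le_antisymm (le_trans (hM y hy) h) (hm y hy)
    exact hxy (hx'.trans hy'.symm)
  have hdm : d ≠ m := fun h => hdS (h ▸ hmS)
  have hdM : d ≠ M := fun h => hdS (h ▸ hMS)
  have hne : m ≠ M := hmM.ne
  set E := S.erase M with hE
  set Q := E.erase m with hQ
  have hmE : m ∈ E := Finset.mem_erase.2 ⟨hne, hmS⟩
  have hdE : d ∉ E := fun h => hdS (Finset.mem_of_mem_erase h)
  have hdQ : d ∉ Q := fun h => hdE (Finset.mem_of_mem_erase h)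
  have hmQ : m ∉ Q := Finset.notMem_erase m E
  have hME : M ∉ E := Finset.notMem_erase M S
  have hMQ : M ∉ Q := fun h => hME (Finset.mem_of_mem_erase h)
  have hMm : M ∈ S.erase m := Finset.mem_erase.2 ⟨hne.symm, hMS⟩
  have e1 : (insert d S).erase M = insert d E := Finset.erase_insert_of_ne hdM
  have e2 : ((insert d S).erase m).erase M = insert d Q := by
    rw [Finset.erase_insert_of_ne hdm, Finset.erase_insert_of_ne hdM, hQ, hE,
      erase_comm' ..]
  have e3 : S.erase m = insert M Q := by
    rw [hQ, hE, erase_comm' .., Finset.insert_erase hMm]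
  have e4 : S = insert M E := (Finset.insert_erase hMS).symm
  have e5 : E = insert m Q := (Finset.insert_erase hmE).symm
  rw [e1, e2]
  conv_lhs => rw [e3]
  conv_rhs => rw [e4]
  rw [star_insert' hdE, star_insert' hMQ, star_insert' hME, star_insert' hdQ]
  have p1 : ∏ z ∈ E, (d + z) = (d + m) * ∏ z ∈ Q, (d + z) := by
    rw [e5, Finset.prod_insert hmQ]
  have p2 : ∏ z ∈ E, (M + z) = (M + m) * ∏ z ∈ Q, (M + z) := by
    rw [e5, Finset.prod_insert hmQ]
  rw [p1, p2]
  ring
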